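/- The number of lower-order ideals of width m in the poset of positive noncompact roots of su(p,q) equals C(p+q, m) - C(p+q, m-1). Concretely: for the poset P = {(i,j) : 1 ≤ i ≤ p < j ≤ p+q} with partial order (i,j) ≤ (i',j') iff i ≥ i' and j ≤ j', the number of lower-order ideals (downward-closed subsets) of P whose maximal antichain has cardinality m equals C(p+q, m) - C(p+q, m-1), for 0 ≤ m ≤ min(p,q). -/

import Mathlib

namespace Stmt0

/-- The order on the poset of positive noncompact roots of `su(p,q)`:
`(i,j) ≤ (i',j')` iff `i ≥ i'` and `j ≤ j'`. -/
def le (a b : ℕ × ℕ) : Prop := b.1 ≤ a.1 ∧ a.2 ≤ b.2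

/-- The poset `P = {(i,j) : 1 ≤ i ≤ p < j ≤ p+q}`. -/
def P (p q : ℕ) : Finset (ℕ × ℕ) := Finset.Icc 1 p ×ˢ Finset.Icc (p + 1) (p + q)

/-- `Y` is a lower-order ideal (downward-closed subset) of `P p q`. -/
def IsLowerIdeal (p q : ℕ) (Y : Finset (ℕ × ℕ)) : Prop :=
  Y ⊆ P p q ∧ ∀ x ∈ P p q, ∀ y ∈ Y, le x y → x ∈ Y

/-- `A` is an antichain contained in `Y`. -/
def IsAntichainIn (Y A : Finset (ℕ × ℕ)) : Prop :=
  A ⊆ Y ∧ ∀ a ∈ A, ∀ b ∈ A, a ≠ b → ¬ le a b ∧ ¬ le b a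

/-- The width of `Y` (maximal cardinality of an antichain in `Y`) is `m`. -/
def WidthIs (Y : Finset (ℕ × ℕ)) (m : ℕ) : Prop :=
  (∃ A, IsAntichainIn Y A ∧ A.card = m) ∧ ∀ A, IsAntichainIn Y A → A.card ≤ m

/-! ### Auxiliary development -/

open Finset

attribute [local instance 10] Classical.propDecidable

lemma le_mk_iff {i j : ℕ} {b : ℕ × ℕ} : le (i, j) b ↔ b.1 ≤ i ∧ j ≤ b.2 := Iff.rfl

lemma le_iff {a b : ℕ × ℕ} : le a b ↔ b.1 ≤ a.1 ∧ a.2 ≤ b.2 := Iff.rfl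

lemma mem_P {p q : ℕ} {x : ℕ × ℕ} :
    x ∈ P p q ↔ 1 ≤ x.1 ∧ x.1 ≤ p ∧ p + 1 ≤ x.2 ∧ x.2 ≤ p + q := by
  unfold P
  rw [Finset.mem_product, Finset.mem_Icc, Finset.mem_Icc]
  omega

lemma mem_P_mk {p q i j : ℕ} :
    (i, j) ∈ P p q ↔ 1 ≤ i ∧ i ≤ p ∧ p + 1 ≤ j ∧ j ≤ p + q := mem_P

/-- The diagonal antichain of size `k`. -/
def Dg (p k : ℕ) : Finset (ℕ × ℕ) := (Finset.Icc 1 k).image (fun t => (p + t - k, p + t))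

lemma mem_Dg {p k : ℕ} {x : ℕ × ℕ} :
    x ∈ Dg p k ↔ ∃ t, 1 ≤ t ∧ t ≤ k ∧ (p + t - k, p + t) = x := by
  unfold Dg
  simp only [Finset.mem_image, Finset.mem_Icc]
  constructor
  · rintro ⟨t, ⟨h1, h2⟩, h3⟩; exact ⟨t, h1, h2, h3⟩
  · rintro ⟨t, h1, h2, h3⟩; exact ⟨t, ⟨h1, h2⟩, h3⟩

/-- The `i`-th row of `Y` (as a set of second coordinates). -/
def rowset (Y : Finset (ℕ × ℕ)) (i : ℕ) : Finset ℕ :=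
  (Y.filter (fun x => x.1 = i)).image Prod.snd

/-- The length of the `i`-th row of `Y`. -/
def rl (Y : Finset (ℕ × ℕ)) (i : ℕ) : ℕ := (rowset Y i).card

lemma mem_rowset {Y : Finset (ℕ × ℕ)} {i j : ℕ} : j ∈ rowset Y i ↔ (i, j) ∈ Y := by
  unfold rowset
  simp only [Finset.mem_image, Finset.mem_filter]
  constructor
  · rintro ⟨⟨a, b⟩, ⟨hY, h1⟩, h2⟩
    simp only at h1 h2
    rw [← h1, ← h2]; exact hY
  · intro h; exact ⟨(i, j), ⟨h, rfl⟩, rfl⟩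

/-- A downward-closed subset of an interval is an initial interval. -/
lemma lower_interval {a n : ℕ} {R : Finset ℕ} (hR : R ⊆ Finset.Icc (a+1) (a+n))
    (hdc : ∀ j ∈ R, ∀ j', a+1 ≤ j' → j' ≤ j → j' ∈ R) :
    R = Finset.Icc (a+1) (a + R.card) := by
  ext j
  simp only [Finset.mem_Icc]
  constructor
  · intro hj
    have h1 := Finset.mem_Icc.1 (hR hj)
    refine ⟨h1.1, ?_⟩
    have hsub : Finset.Icc (a+1) j ⊆ R := by
      intro j' hj'
      have := Finset.mem_Icc.1 hj'
      exact hdc j hj j' this.1 this.2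
    have := Finset.card_le_card hsub
    rw [Nat.card_Icc] at this
    omega
  · rintro ⟨h1, h2⟩
    by_contra hj
    have hsub : R ⊆ Finset.Icc (a+1) (j-1) := by
      intro j'' hj''
      have hb := Finset.mem_Icc.1 (hR hj'')
      rw [Finset.mem_Icc]
      refine ⟨hb.1, ?_⟩
      by_contra hlt
      push_neg at hlt
      exact hj (hdc j'' hj'' j h1 (by omega))
    have := Finset.card_le_card hsub
    rw [Nat.card_Icc] at this
    omega

lemma rowset_eq {p q : ℕ} {Y : Finset (ℕ × ℕ)} (hY : IsLowerIdeal p q Y)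
    {i : ℕ} (h1 : 1 ≤ i) (h2 : i ≤ p) :
    rowset Y i = Finset.Icc (p+1) (p + rl Y i) := by
  apply lower_interval (n := q)
  · intro j hj
    have := mem_P.1 (hY.1 (mem_rowset.1 hj))
    exact Finset.mem_Icc.2 ⟨this.2.2.1, this.2.2.2⟩
  · intro j hj j' hj'1 hj'2
    rw [mem_rowset] at hj ⊢
    have hjP := mem_P.1 (hY.1 hj)
    refine hY.2 (i, j') ?_ (i, j) hj ⟨le_rfl, hj'2⟩
    exact mem_P_mk.2 ⟨h1, h2, hj'1, by omega⟩

lemma mem_Y_iff {p q : ℕ} {Y : Finset (ℕ × ℕ)} (hY : IsLowerIdeal p q Y) {i j : ℕ} :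
    (i, j) ∈ Y ↔ 1 ≤ i ∧ i ≤ p ∧ p + 1 ≤ j ∧ j ≤ p + rl Y i := by
  constructor
  · intro h
    have hp := mem_P.1 (hY.1 h)
    have hr : j ∈ rowset Y i := mem_rowset.2 h
    rw [rowset_eq hY hp.1 hp.2.1, Finset.mem_Icc] at hr
    exact ⟨hp.1, hp.2.1, hr.1, hr.2⟩
  · rintro ⟨h1, h2, h3, h4⟩
    apply mem_rowset.1
    rw [rowset_eq hY h1 h2]
    exact Finset.mem_Icc.2 ⟨h3, h4⟩

lemma rl_le_q {p q : ℕ} {Y : Finset (ℕ × ℕ)} (hY : IsLowerIdeal p q Y) (i : ℕ) :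
    rl Y i ≤ q := by
  have hsub : rowset Y i ⊆ Finset.Icc (p+1) (p+q) := by
    intro j hj
    have := mem_P.1 (hY.1 (mem_rowset.1 hj))
    exact Finset.mem_Icc.2 ⟨this.2.2.1, this.2.2.2⟩
  have := Finset.card_le_card hsub
  rw [Nat.card_Icc] at this
  unfold rl
  omega

lemma rl_mono {p q : ℕ} {Y : Finset (ℕ × ℕ)} (hY : IsLowerIdeal p q Y)
    {i i' : ℕ} (h1 : 1 ≤ i) (h2 : i ≤ i') (h3 : i' ≤ p) : rl Y i ≤ rl Y i' := by
  apply Finset.card_le_card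
  intro j hj
  rw [mem_rowset] at hj ⊢
  have hjP := mem_P.1 (hY.1 hj)
  refine hY.2 (i', j) ?_ (i, j) hj ⟨h2, le_rfl⟩
  exact mem_P_mk.2 ⟨by omega, h3, hjP.2.2.1, hjP.2.2.2⟩

/-! ### Counting function on subsets -/

/-- number of elements of `S` that are `≤ r`. -/
def cnt (S : Finset ℕ) (r : ℕ) : ℕ := (S.filter (fun x => x ≤ r)).card

lemma cnt_mono (S : Finset ℕ) {r r' : ℕ} (h : r ≤ r') : cnt S r ≤ cnt S r' := by
  apply Finset.card_le_card
  intro x hx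
  rw [Finset.mem_filter] at hx ⊢
  exact ⟨hx.1, le_trans hx.2 h⟩

lemma cnt_le_add (S : Finset ℕ) (r d : ℕ) : cnt S (r + d) ≤ cnt S r + d := by
  unfold cnt
  have hsub : S.filter (fun x => x ≤ r + d) ⊆ S.filter (fun x => x ≤ r) ∪ Finset.Icc (r+1) (r+d) := by
    intro x hx
    rw [Finset.mem_filter] at hx
    rw [Finset.mem_union, Finset.mem_filter, Finset.mem_Icc]
    rcases le_or_gt x r with h | h
    · exact Or.inl ⟨hx.1, h⟩
    · exact Or.inr ⟨h, hx.2⟩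
  calc (S.filter (fun x => x ≤ r + d)).card
      ≤ (S.filter (fun x => x ≤ r) ∪ Finset.Icc (r+1) (r+d)).card := Finset.card_le_card hsub
    _ ≤ (S.filter (fun x => x ≤ r)).card + (Finset.Icc (r+1) (r+d)).card := Finset.card_union_le _ _
    _ ≤ (S.filter (fun x => x ≤ r)).card + d := by rw [Nat.card_Icc]; omega

lemma cnt_le_card (S : Finset ℕ) (r : ℕ) : cnt S r ≤ S.card :=
  Finset.card_le_card (Finset.filter_subset _ _)

lemma cnt_le_self {n : ℕ} {S : Finset ℕ} (hS : S ⊆ Finset.Icc 1 n) (r : ℕ) : cnt S r ≤ r := by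
  have hsub : S.filter (fun x => x ≤ r) ⊆ Finset.Icc 1 r := by
    intro x hx
    rw [Finset.mem_filter] at hx
    have := Finset.mem_Icc.1 (hS hx.1)
    exact Finset.mem_Icc.2 ⟨this.1, hx.2⟩
  have := Finset.card_le_card hsub
  rw [Nat.card_Icc] at this
  unfold cnt
  omega

lemma cnt_eq_card {n : ℕ} {S : Finset ℕ} (hS : S ⊆ Finset.Icc 1 n) {r : ℕ} (hr : n ≤ r) :
    cnt S r = S.card := by
  unfold cnt
  congr 1
  apply Finset.filter_true_of_mem
  intro x hx
  have := Finset.mem_Icc.1 (hS hx)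
  omega

lemma cnt_lower {n : ℕ} {S : Finset ℕ} (hS : S ⊆ Finset.Icc 1 n) {r : ℕ} (hr : r ≤ n) :
    S.card ≤ cnt S r + (n - r) := by
  have hsplit := Finset.card_filter_add_card_filter_not (s := S) (p := fun x => x ≤ r)
  have hsub : S.filter (fun x => ¬ x ≤ r) ⊆ Finset.Icc (r+1) n := by
    intro x hx
    rw [Finset.mem_filter] at hx
    have := Finset.mem_Icc.1 (hS hx.1)
    rw [Finset.mem_Icc]
    omega
  have := Finset.card_le_card hsub
  rw [Nat.card_Icc] at this
  unfold cnt
  omega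

lemma mem_of_cnt {S : Finset ℕ} {v : ℕ} (hv : 1 ≤ v) (h : cnt S (v-1) < cnt S v) : v ∈ S := by
  by_contra hvS
  have : S.filter (fun x => x ≤ v) = S.filter (fun x => x ≤ v - 1) := by
    apply Finset.filter_congr
    intro x hx
    have hxv : x ≠ v := fun he => hvS (he ▸ hx)
    constructor <;> intro <;> omega
  unfold cnt at h
  rw [this] at h
  omega

/-! ### The maps between ideals and subsets -/

def Good (p k : ℕ) (S : Finset ℕ) : Prop := ∀ r, 2 * cnt S r + k ≤ r + p

def SY (p : ℕ) (Y : Finset (ℕ × ℕ)) : Finset ℕ :=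
  (Finset.Icc 1 p).image (fun i => rl Y i + i)

def YS (p q : ℕ) (S : Finset ℕ) : Finset (ℕ × ℕ) :=
  (P p q).filter (fun x => cnt S (x.1 + x.2 - (p+1)) < x.1)

lemma rl_add_lt {p q : ℕ} {Y : Finset (ℕ × ℕ)} (hY : IsLowerIdeal p q Y)
    {i i' : ℕ} (h1 : 1 ≤ i) (h3 : i' ≤ p) (hlt : i < i') : rl Y i + i < rl Y i' + i' := by
  have := rl_mono hY h1 (le_of_lt hlt) h3
  omega

lemma sy_injOn {p q : ℕ} {Y : Finset (ℕ × ℕ)} (hY : IsLowerIdeal p q Y) :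
    Set.InjOn (fun i => rl Y i + i) ↑(Finset.Icc 1 p) := by
  intro a ha b hb hab
  simp only [Finset.coe_Icc, Set.mem_Icc] at ha hb
  by_contra hne
  rcases lt_or_gt_of_ne hne with h | h
  · have := rl_add_lt hY ha.1 hb.2 h; simp only at hab; omega
  · have := rl_add_lt hY hb.1 ha.2 h; simp only at hab; omega

lemma sy_card {p q : ℕ} {Y : Finset (ℕ × ℕ)} (hY : IsLowerIdeal p q Y) :
    (SY p Y).card = p := by
  unfold SY
  rw [Finset.card_image_of_injOn (sy_injOn hY), Nat.card_Icc]
  omega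

lemma sy_sub {p q : ℕ} {Y : Finset (ℕ × ℕ)} (hY : IsLowerIdeal p q Y) :
    SY p Y ⊆ Finset.Icc 1 (p+q) := by
  intro v hv
  obtain ⟨i, hi, rfl⟩ := Finset.mem_image.1 hv
  rw [Finset.mem_Icc] at hi
  have := rl_le_q hY i
  exact Finset.mem_Icc.2 ⟨by omega, by omega⟩

lemma cnt_SY {p q : ℕ} {Y : Finset (ℕ × ℕ)} (hY : IsLowerIdeal p q Y) (r : ℕ) :
    cnt (SY p Y) r = ((Finset.Icc 1 p).filter (fun i => rl Y i + i ≤ r)).card := by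
  unfold cnt SY
  rw [Finset.filter_image]
  rw [Finset.card_image_of_injOn (Set.InjOn.mono (by intro x hx; simpa using (Finset.filter_subset _ _) hx) (sy_injOn hY))]

lemma filter_rl_eq {p q : ℕ} {Y : Finset (ℕ × ℕ)} (hY : IsLowerIdeal p q Y) (r : ℕ) :
    (Finset.Icc 1 p).filter (fun i => rl Y i + i ≤ r)
      = Finset.Icc 1 (((Finset.Icc 1 p).filter (fun i => rl Y i + i ≤ r)).card) := by
  have h := lower_interval (a := 0) (n := p)
      (R := (Finset.Icc 1 p).filter (fun i => rl Y i + i ≤ r)) ?_ ?_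
  · simpa using h
  · intro i hi
    have := Finset.mem_Icc.1 (Finset.mem_filter.1 hi).1
    simp only [Nat.zero_add]
    exact Finset.mem_Icc.2 this
  · intro i hi i' h1 h2
    rw [Finset.mem_filter, Finset.mem_Icc] at hi ⊢
    have hmono := rl_mono hY (by omega : 1 ≤ i') h2 (by omega : i ≤ p)
    exact ⟨⟨by omega, by omega⟩, by omega⟩

lemma diag_iff_good {p q k : ℕ} {Y : Finset (ℕ × ℕ)} (hY : IsLowerIdeal p q Y)
    (hkp : k ≤ p) (hkq : k ≤ q) : Dg p k ⊆ Y ↔ Good p k (SY p Y) := by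
  constructor
  · intro hD r
    by_contra hcon
    push_neg at hcon
    rw [cnt_SY hY] at hcon
    have hFeq := filter_rl_eq hY (Y := Y) r
    generalize hcgen : ((Finset.Icc 1 p).filter (fun i => rl Y i + i ≤ r)).card = c at hcon hFeq
    have hc1 : 1 ≤ c := by omega
    have hcF : c ∈ (Finset.Icc 1 p).filter (fun i => rl Y i + i ≤ r) := by
      rw [hFeq]; exact Finset.mem_Icc.2 ⟨hc1, le_rfl⟩
    rw [Finset.mem_filter, Finset.mem_Icc] at hcF
    have hrlc : rl Y c + c ≤ r := hcF.2
    have hcp : c ≤ p := hcF.1.2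
    have hcell : (p + (c + k - p) - k, p + (c + k - p)) ∈ Y :=
      hD (mem_Dg.2 ⟨c + k - p, by omega, by omega, rfl⟩)
    have hmem := (mem_Y_iff hY).1 hcell
    have hpt : p + (c + k - p) - k = c := by omega
    rw [hpt] at hmem
    have h4 := hmem.2.2.2
    omega
  · intro hG x hx
    obtain ⟨t, ht1, htk, rfl⟩ := mem_Dg.1 hx
    rw [mem_Y_iff hY]
    refine ⟨by omega, by omega, by omega, ?_⟩
    by_contra hcon
    push_neg at hcon
    set i0 := p + t - k with hi0
    set r := i0 + t - 1 with hr
    have hsub : Finset.Icc 1 i0 ⊆ (Finset.Icc 1 p).filter (fun i => rl Y i + i ≤ r) := by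
      intro i hi
      rw [Finset.mem_Icc] at hi
      rw [Finset.mem_filter, Finset.mem_Icc]
      have hmono : rl Y i ≤ rl Y i0 := rl_mono hY hi.1 hi.2 (by omega)
      exact ⟨⟨hi.1, by omega⟩, by omega⟩
    have hge : i0 ≤ cnt (SY p Y) r := by
      rw [cnt_SY hY]
      have := Finset.card_le_card hsub
      rw [Nat.card_Icc] at this
      omega
    have := hG r
    omega

lemma ys_ideal (p q : ℕ) (S : Finset ℕ) : IsLowerIdeal p q (YS p q S) := by
  constructor
  · exact Finset.filter_subset _ _
  · intro x hx y hy hle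
    rw [YS, Finset.mem_filter] at hy ⊢
    obtain ⟨hyP, hycnt⟩ := hy
    have hbx := mem_P.1 hx
    have hby := mem_P.1 hyP
    obtain ⟨h1, h2⟩ := hle
    refine ⟨hx, ?_⟩
    have key : cnt S (x.1 + x.2 - (p+1)) ≤ cnt S (y.1 + y.2 - (p+1)) + (x.1 - y.1) := by
      refine le_trans (cnt_mono S (by omega : x.1 + x.2 - (p+1) ≤ (y.1 + y.2 - (p+1)) + (x.1 - y.1))) ?_
      exact cnt_le_add S _ _
    omega

lemma ys_rowset {p q : ℕ} {S : Finset ℕ} {i : ℕ} (h1 : 1 ≤ i) (h2 : i ≤ p) :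
    rowset (YS p q S) i
      = (Finset.Icc (p+1) (p+q)).filter (fun j => cnt S (i + j - (p+1)) < i) := by
  ext j
  rw [mem_rowset, YS, Finset.mem_filter, Finset.mem_filter, Finset.mem_Icc, mem_P_mk]
  constructor
  · rintro ⟨⟨_, _, h3, h4⟩, h5⟩
    exact ⟨⟨h3, h4⟩, h5⟩
  · rintro ⟨⟨h3, h4⟩, h5⟩
    exact ⟨⟨h1, h2, h3, h4⟩, h5⟩

lemma sy_ys {p q : ℕ} {S : Finset ℕ} (hS : S ⊆ Finset.Icc 1 (p+q)) (hcard : S.card = p) :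
    SY p (YS p q S) = S := by
  have hideal := ys_ideal p q S
  have hmem : ∀ i, 1 ≤ i → i ≤ p → rl (YS p q S) i + i ∈ S := by
    intro i h1 h2
    set c := rl (YS p q S) i with hcdef
    have hcval : c = ((Finset.Icc (p+1) (p+q)).filter (fun j => cnt S (i + j - (p+1)) < i)).card := by
      rw [hcdef, rl, ys_rowset h1 h2]
    have hset : (Finset.Icc (p+1) (p+q)).filter (fun j => cnt S (i + j - (p+1)) < i)
        = Finset.Icc (p+1) (p + c) := by
      rw [hcval]
      apply lower_interval (n := q)
      · exact Finset.filter_subset _ _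
      · intro j hj j' hj'1 hj'2
        rw [Finset.mem_filter, Finset.mem_Icc] at hj ⊢
        refine ⟨⟨hj'1, by omega⟩, ?_⟩
        exact lt_of_le_of_lt (cnt_mono S (by omega)) hj.2
    have hcq : c ≤ q := by
      rw [hcval]
      have := Finset.card_le_card (Finset.filter_subset
        (fun j => cnt S (i + j - (p+1)) < i) (Finset.Icc (p+1) (p+q)))
      rw [Nat.card_Icc] at this
      omega
    have hs1 : cnt S (c + i - 1) < i := by
      rcases Nat.eq_zero_or_pos c with h0 | hpos
      · rw [h0]
        have := cnt_le_self hS (0 + i - 1)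
        omega
      · have hmm : p + c ∈ Finset.Icc (p+1) (p + c) := Finset.mem_Icc.2 ⟨by omega, le_rfl⟩
        rw [← hset, Finset.mem_filter] at hmm
        have h := hmm.2
        have he : i + (p + c) - (p+1) = c + i - 1 := by omega
        rwa [he] at h
    have hs2 : i ≤ cnt S (c + i) := by
      rcases lt_or_ge c q with hlt | hge
      · have hnm : p + c + 1 ∉ Finset.Icc (p+1) (p + c) := by
          rw [Finset.mem_Icc]; omega
        rw [← hset, Finset.mem_filter] at hnm
        push_neg at hnm
        have h := hnm (Finset.mem_Icc.2 ⟨by omega, by omega⟩)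
        have he : i + (p + c + 1) - (p+1) = c + i := by omega
        rwa [he] at h
      · have hcq' : c = q := le_antisymm hcq hge
        have := cnt_lower hS (r := c + i) (by omega)
        omega
    exact mem_of_cnt (by omega) (by omega)
  have hsub : SY p (YS p q S) ⊆ S := by
    intro v hv
    obtain ⟨i, hi, rfl⟩ := Finset.mem_image.1 hv
    rw [Finset.mem_Icc] at hi
    exact hmem i hi.1 hi.2
  exact Finset.eq_of_subset_of_card_le hsub (by rw [sy_card hideal, hcard])

lemma ys_sy {p q : ℕ} {Y : Finset (ℕ × ℕ)} (hY : IsLowerIdeal p q Y) :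
    YS p q (SY p Y) = Y := by
  ext x
  rw [YS, Finset.mem_filter]
  constructor
  · rintro ⟨hxP, hcnt⟩
    have hb := mem_P.1 hxP
    by_contra hxY
    have hnot : ¬ x.2 ≤ p + rl Y x.1 := by
      intro h
      apply hxY
      have := (mem_Y_iff hY (i := x.1) (j := x.2)).2 ⟨hb.1, hb.2.1, hb.2.2.1, h⟩
      simpa using this
    have hx1mem : x.1 ∈ (Finset.Icc 1 p).filter
        (fun i => rl Y i + i ≤ x.1 + x.2 - (p+1)) :=
      Finset.mem_filter.2 ⟨Finset.mem_Icc.2 ⟨hb.1, hb.2.1⟩, by omega⟩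
    rw [filter_rl_eq hY, Finset.mem_Icc] at hx1mem
    rw [cnt_SY hY] at hcnt
    omega
  · intro hxY
    have hxP := hY.1 hxY
    refine ⟨hxP, ?_⟩
    have hb := mem_P.1 hxP
    have hx2 : x.2 ≤ p + rl Y x.1 := by
      have := (mem_Y_iff hY (i := x.1) (j := x.2)).1 (by simpa using hxY)
      exact this.2.2.2
    rw [cnt_SY hY]
    by_contra h
    push_neg at h
    have hx1mem : x.1 ∈ (Finset.Icc 1 p).filter
        (fun i => rl Y i + i ≤ x.1 + x.2 - (p+1)) := by
      rw [filter_rl_eq hY]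
      exact Finset.mem_Icc.2 ⟨hb.1, h⟩
    have := (Finset.mem_filter.1 hx1mem).2
    omega

/-! ### Reflection -/

/-- The first "hitting time" of the reflection argument. -/
noncomputable def hitR (p k : ℕ) (S : Finset ℕ) : ℕ :=
  sInf {r | r + p + 1 ≤ 2 * cnt S r + k}

/-- The reflection map: flip membership strictly after the first hitting time. -/
noncomputable def reflS (p q k : ℕ) (S : Finset ℕ) : Finset ℕ :=
  S.filter (fun x => x ≤ hitR p k S)
    ∪ (Finset.Icc (hitR p k S + 1) (p+q)).filter (fun x => x ∉ S)

lemma mem_reflS {p q k : ℕ} {S : Finset ℕ} {x : ℕ} :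
    x ∈ reflS p q k S ↔ ((x ∈ S ∧ x ≤ hitR p k S)
      ∨ (hitR p k S + 1 ≤ x ∧ x ≤ p + q ∧ x ∉ S)) := by
  unfold reflS
  simp only [Finset.mem_union, Finset.mem_filter, Finset.mem_Icc]
  tauto

lemma cnt_zero {n : ℕ} {S : Finset ℕ} (hS : S ⊆ Finset.Icc 1 n) : cnt S 0 = 0 := by
  unfold cnt
  rw [Finset.card_eq_zero]
  apply Finset.eq_empty_of_forall_notMem
  intro x hx
  rw [Finset.mem_filter] at hx
  have := Finset.mem_Icc.1 (hS hx.1)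
  omega

lemma hit_eq {p q k : ℕ} {S : Finset ℕ} (hS : S ⊆ Finset.Icc 1 (p+q)) (hkp : k ≤ p)
    (hne : {r | r + p + 1 ≤ 2 * cnt S r + k}.Nonempty) :
    hitR p k S + p + 1 = 2 * cnt S (hitR p k S) + k ∧ 1 ≤ hitR p k S := by
  have hr0mem : hitR p k S + p + 1 ≤ 2 * cnt S (hitR p k S) + k := Nat.sInf_mem hne
  have hpos : 1 ≤ hitR p k S := by
    rcases Nat.eq_zero_or_pos (hitR p k S) with h0 | h
    · exfalso
      rw [h0] at hr0mem
      rw [cnt_zero hS] at hr0mem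
      omega
    · exact h
  have hprev : ¬ ((hitR p k S - 1) + p + 1 ≤ 2 * cnt S (hitR p k S - 1) + k) := by
    intro hcontra
    have h2 : hitR p k S ≤ hitR p k S - 1 := Nat.sInf_le hcontra
    omega
  have hstep : cnt S (hitR p k S) ≤ cnt S (hitR p k S - 1) + 1 := by
    have := cnt_le_add S (hitR p k S - 1) 1
    have he : hitR p k S - 1 + 1 = hitR p k S := by omega
    rwa [he] at this
  exact ⟨by omega, hpos⟩

lemma cnt_reflS {p q k : ℕ} {S : Finset ℕ} {r : ℕ} (hr : r ≤ hitR p k S) :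
    cnt (reflS p q k S) r = cnt S r := by
  unfold cnt
  congr 1
  ext x
  rw [Finset.mem_filter, Finset.mem_filter, mem_reflS]
  constructor
  · rintro ⟨h1 | h1, h2⟩
    · exact ⟨h1.1, h2⟩
    · omega
  · rintro ⟨h1, h2⟩
    exact ⟨Or.inl ⟨h1, by omega⟩, h2⟩

lemma reflS_sub {p q k : ℕ} {S : Finset ℕ} (hS : S ⊆ Finset.Icc 1 (p+q)) :
    reflS p q k S ⊆ Finset.Icc 1 (p+q) := by
  intro x hx
  rw [mem_reflS] at hx
  rcases hx with h | h
  · exact hS h.1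
  · exact Finset.mem_Icc.2 ⟨by omega, h.2.1⟩

lemma card_reflS {p q k : ℕ} {S : Finset ℕ} (hS : S ⊆ Finset.Icc 1 (p+q)) (hkp : k ≤ p)
    (hne : {r | r + p + 1 ≤ 2 * cnt S r + k}.Nonempty) (hr0 : hitR p k S ≤ p + q) :
    (reflS p q k S).card + S.card + k = (p+q) + p + 1 := by
  obtain ⟨heq, hpos⟩ := hit_eq hS hkp hne
  have e2 : (S.filter (fun x => x ≤ hitR p k S)).card
      + (S.filter (fun x => ¬ x ≤ hitR p k S)).card = S.card :=
    Finset.card_filter_add_card_filter_not _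
  have e2' : S.filter (fun x => ¬ x ≤ hitR p k S)
      = (Finset.Icc (hitR p k S + 1) (p+q)).filter (fun x => x ∈ S) := by
    ext x
    rw [Finset.mem_filter, Finset.mem_filter, Finset.mem_Icc]
    constructor
    · rintro ⟨h1, h2⟩
      have := Finset.mem_Icc.1 (hS h1)
      exact ⟨⟨by omega, this.2⟩, h1⟩
    · rintro ⟨⟨h1, _⟩, h2⟩
      exact ⟨h2, by omega⟩
  have e3 : ((Finset.Icc (hitR p k S + 1) (p+q)).filter (fun x => x ∈ S)).card
      + ((Finset.Icc (hitR p k S + 1) (p+q)).filter (fun x => ¬ x ∈ S)).card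
      = (p+q) + 1 - (hitR p k S + 1) := by
    have := Finset.card_filter_add_card_filter_not
      (s := Finset.Icc (hitR p k S + 1) (p+q)) (p := fun x => x ∈ S)
    rw [Nat.card_Icc] at this
    convert this using 3
  have e3' : ((Finset.Icc (hitR p k S + 1) (p+q)).filter (fun x => x ∉ S)).card
      = ((Finset.Icc (hitR p k S + 1) (p+q)).filter (fun x => ¬ x ∈ S)).card := rfl
  have e4 : (reflS p q k S).card = (S.filter (fun x => x ≤ hitR p k S)).card
      + ((Finset.Icc (hitR p k S + 1) (p+q)).filter (fun x => x ∉ S)).card := by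
    unfold reflS
    apply Finset.card_union_of_disjoint
    rw [Finset.disjoint_left]
    intro x hx hx'
    rw [Finset.mem_filter] at hx
    rw [Finset.mem_filter, Finset.mem_Icc] at hx'
    omega
  have eA : (S.filter (fun x => x ≤ hitR p k S)).card = cnt S (hitR p k S) := rfl
  rw [e2'] at e2
  rw [eA] at e2
  rw [e4, e3', eA]
  omega

lemma hitR_reflS {p q k : ℕ} {S : Finset ℕ} (hS : S ⊆ Finset.Icc 1 (p+q)) (hkp : k ≤ p)
    (hne : {r | r + p + 1 ≤ 2 * cnt S r + k}.Nonempty) :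
    hitR p k (reflS p q k S) = hitR p k S := by
  obtain ⟨heq, hpos⟩ := hit_eq hS hkp hne
  have hmem' : hitR p k S ∈ {r | r + p + 1 ≤ 2 * cnt (reflS p q k S) r + k} := by
    show hitR p k S + p + 1 ≤ 2 * cnt (reflS p q k S) (hitR p k S) + k
    rw [cnt_reflS (le_refl (hitR p k S))]
    omega
  apply le_antisymm
  · exact Nat.sInf_le hmem'
  · by_contra hcon
    push_neg at hcon
    have hr1 : hitR p k (reflS p q k S) + p + 1
        ≤ 2 * cnt (reflS p q k S) (hitR p k (reflS p q k S)) + k :=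
      Nat.sInf_mem (⟨hitR p k S, hmem'⟩ :
        {r | r + p + 1 ≤ 2 * cnt (reflS p q k S) r + k}.Nonempty)
    rw [cnt_reflS (by omega : hitR p k (reflS p q k S) ≤ hitR p k S)] at hr1
    have : hitR p k S ≤ hitR p k (reflS p q k S) := Nat.sInf_le hr1
    omega

lemma reflS_reflS {p q k : ℕ} {S : Finset ℕ} (hS : S ⊆ Finset.Icc 1 (p+q)) (hkp : k ≤ p)
    (hne : {r | r + p + 1 ≤ 2 * cnt S r + k}.Nonempty) :
    reflS p q k (reflS p q k S) = S := by
  have hr := hitR_reflS hS hkp hne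
  ext x
  simp only [mem_reflS]
  rw [hr]
  have hxn : x ∈ S → (1 ≤ x ∧ x ≤ p + q) := fun h => Finset.mem_Icc.1 (hS h)
  by_cases hle : x ≤ hitR p k S
  · by_cases hmem : x ∈ S
    · simp [hle, hmem]
    · simp [hle, hmem]
  · by_cases hmem : x ∈ S
    · have := hxn hmem
      simp [hle, hmem]
      omega
    · simp [hle, hmem]
      intro h1 h2
      omega

lemma not_good_iff {p k : ℕ} {S : Finset ℕ} :
    ¬ Good p k S ↔ {r | r + p + 1 ≤ 2 * cnt S r + k}.Nonempty := by
  constructor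
  · intro h
    rw [Good] at h
    push_neg at h
    obtain ⟨r, hr⟩ := h
    refine ⟨r, ?_⟩
    simp only [Set.mem_setOf_eq]
    omega
  · rintro ⟨r, hr⟩
    intro hg
    have := hg r
    simp only [Set.mem_setOf_eq] at hr
    omega

lemma card_bad (p q k : ℕ) (hkp : k ≤ p) (hkq : k ≤ q) :
    (((Finset.Icc 1 (p+q)).powersetCard p).filter (fun S => ¬ Good p k S)).card
      = (p+q).choose (p+q+1-k) := by
  have htgt : ((Finset.Icc 1 (p+q)).powersetCard (p+q+1-k)).card = (p+q).choose (p+q+1-k) := by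
    rw [Finset.card_powersetCard, Nat.card_Icc]
    congr 1
  rw [← htgt]
  apply Finset.card_nbij' (reflS p q k) (reflS p q k)
  · -- bad ↦ target
    intro S hS
    rw [Finset.mem_coe, Finset.mem_filter, Finset.mem_powersetCard] at hS
    obtain ⟨⟨hsub, hcard⟩, hbad⟩ := hS
    have hne := not_good_iff.1 hbad
    obtain ⟨heq, hpos⟩ := hit_eq hsub hkp hne
    have hr0 : hitR p k S ≤ p + q := by
      have := cnt_le_card S (hitR p k S)
      omega
    have hcr := card_reflS hsub hkp hne hr0
    rw [Finset.mem_coe, Finset.mem_powersetCard]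
    exact ⟨reflS_sub hsub, by omega⟩
  · -- target ↦ bad
    intro T hT
    rw [Finset.mem_coe, Finset.mem_powersetCard] at hT
    obtain ⟨hsub, hcard⟩ := hT
    have hhit : (p+q) + p + 1 ≤ 2 * cnt T (p+q) + k := by
      rw [cnt_eq_card hsub (le_refl (p+q)), hcard]
      omega
    have hne : {r | r + p + 1 ≤ 2 * cnt T r + k}.Nonempty := ⟨p+q, hhit⟩
    have hr0 : hitR p k T ≤ p + q := Nat.sInf_le hhit
    obtain ⟨heq, hpos⟩ := hit_eq hsub hkp hne
    have hcr := card_reflS hsub hkp hne hr0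
    rw [Finset.mem_coe, Finset.mem_filter, Finset.mem_powersetCard]
    refine ⟨⟨reflS_sub hsub, by omega⟩, ?_⟩
    rw [not_good_iff]
    refine ⟨hitR p k T, ?_⟩
    show hitR p k T + p + 1 ≤ 2 * cnt (reflS p q k T) (hitR p k T) + k
    rw [cnt_reflS (le_refl _)]
    omega
  · intro S hS
    rw [Finset.mem_coe, Finset.mem_filter, Finset.mem_powersetCard] at hS
    exact reflS_reflS hS.1.1 hkp (not_good_iff.1 hS.2)
  · intro T hT
    rw [Finset.mem_coe, Finset.mem_powersetCard] at hT
    have hhit : (p+q) + p + 1 ≤ 2 * cnt T (p+q) + k := by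
      rw [cnt_eq_card hT.1 (le_refl (p+q)), hT.2]
      omega
    exact reflS_reflS hT.1 hkp ⟨p+q, hhit⟩

lemma card_good (p q k : ℕ) (hkp : k ≤ p) (hkq : k ≤ q) :
    (((Finset.Icc 1 (p+q)).powersetCard p).filter (fun S => Good p k S)).card
      = (p+q).choose p - (p+q).choose (p+q+1-k) := by
  have h := Finset.card_filter_add_card_filter_not
    (s := (Finset.Icc 1 (p+q)).powersetCard p) (p := fun S => Good p k S)
  have hall : ((Finset.Icc 1 (p+q)).powersetCard p).card = (p+q).choose p := by
    rw [Finset.card_powersetCard, Nat.card_Icc]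
    congr 1
  have hb := card_bad p q k hkp hkq
  omega

/-! ### The set of ideals containing the diagonal of size `k` -/

noncomputable def Fi (p q k : ℕ) : Finset (Finset (ℕ × ℕ)) :=
  ((P p q).powerset).filter (fun Y => IsLowerIdeal p q Y ∧ Dg p k ⊆ Y)

lemma card_Fi {p q k : ℕ} (hkp : k ≤ p) (hkq : k ≤ q) :
    (Fi p q k).card = (p+q).choose p - (p+q).choose (p+q+1-k) := by
  rw [← card_good p q k hkp hkq]
  apply Finset.card_nbij' (SY p) (YS p q)
  · intro Y hY
    rw [Fi, Finset.mem_coe, Finset.mem_filter, Finset.mem_powerset] at hY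
    have hsub := hY.1
    have hid := hY.2.1
    have hD := hY.2.2
    rw [Finset.mem_coe, Finset.mem_filter, Finset.mem_powersetCard]
    exact ⟨⟨sy_sub hid, sy_card hid⟩, (diag_iff_good hid hkp hkq).1 hD⟩
  · intro T hT
    rw [Finset.mem_coe, Finset.mem_filter, Finset.mem_powersetCard] at hT
    obtain ⟨⟨hsub, hcard⟩, hgood⟩ := hT
    have hid := ys_ideal p q T
    rw [Fi, Finset.mem_coe, Finset.mem_filter, Finset.mem_powerset]
    refine ⟨hid.1, hid, ?_⟩
    rw [diag_iff_good hid hkp hkq, sy_ys hsub hcard]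
    exact hgood
  · intro Y hY
    rw [Fi, Finset.mem_coe, Finset.mem_filter] at hY
    exact ys_sy hY.2.1
  · intro T hT
    rw [Finset.mem_coe, Finset.mem_filter, Finset.mem_powersetCard] at hT
    exact sy_ys hT.1.1 hT.1.2

/-! ### Width and diagonals -/

lemma anti_dich {Y A : Finset (ℕ × ℕ)} (hA : IsAntichainIn Y A) {a b : ℕ × ℕ}
    (ha : a ∈ A) (hb : b ∈ A) (hne : a ≠ b) :
    (a.1 < b.1 ∧ a.2 < b.2) ∨ (b.1 < a.1 ∧ b.2 < a.2) := by
  have h := hA.2 a ha b hb hne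
  rw [le_iff, le_iff] at h
  omega

lemma antichain_fst_injOn {Y A : Finset (ℕ × ℕ)} (hA : IsAntichainIn Y A) :
    Set.InjOn (Prod.fst : ℕ × ℕ → ℕ) ↑A := by
  intro a ha b hb hab
  by_contra hne
  have := anti_dich hA (by simpa using ha) (by simpa using hb) hne
  omega

lemma antichain_card_le {p q : ℕ} {Y A : Finset (ℕ × ℕ)} (hYP : Y ⊆ P p q)
    (hA : IsAntichainIn Y A) : A.card ≤ p ∧ A.card ≤ q := by
  constructor
  · have h1 : A.card = (A.image Prod.fst).card :=
      (Finset.card_image_of_injOn (antichain_fst_injOn hA)).symm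
    have h2 : A.image Prod.fst ⊆ Finset.Icc 1 p := by
      intro v hv
      obtain ⟨a, ha, rfl⟩ := Finset.mem_image.1 hv
      have := mem_P.1 (hYP (hA.1 ha))
      exact Finset.mem_Icc.2 ⟨this.1, this.2.1⟩
    have := Finset.card_le_card h2
    rw [Nat.card_Icc] at this
    omega
  · have hsnd : Set.InjOn (Prod.snd : ℕ × ℕ → ℕ) ↑A := by
      intro a ha b hb hab
      by_contra hne
      have := anti_dich hA (by simpa using ha) (by simpa using hb) hne
      omega
    have h1 : A.card = (A.image Prod.snd).card := (Finset.card_image_of_injOn hsnd).symm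
    have h2 : A.image Prod.snd ⊆ Finset.Icc (p+1) (p+q) := by
      intro v hv
      obtain ⟨a, ha, rfl⟩ := Finset.mem_image.1 hv
      have := mem_P.1 (hYP (hA.1 ha))
      exact Finset.mem_Icc.2 ⟨this.2.2.1, this.2.2.2⟩
    have := Finset.card_le_card h2
    rw [Nat.card_Icc] at this
    omega

/-- Normalization: any antichain of size `k` in an ideal forces the
diagonal of size `k` to be contained in the ideal. -/
lemma diag_subset_of_antichain {p q : ℕ} {Y A : Finset (ℕ × ℕ)}
    (hY : IsLowerIdeal p q Y) (hA : IsAntichainIn Y A) : Dg p A.card ⊆ Y := by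
  set k := A.card with hk
  intro x hx
  obtain ⟨t, ht1, htk, rfl⟩ := mem_Dg.1 hx
  -- the ranking function
  have hft : ∀ a ∈ A, (A.filter (fun b => b.1 ≤ a.1)).card ∈ Finset.Icc 1 k := by
    intro a ha
    refine Finset.mem_Icc.2 ⟨?_, ?_⟩
    · exact Finset.card_pos.2 ⟨a, Finset.mem_filter.2 ⟨ha, le_rfl⟩⟩
    · exact Finset.card_le_card (Finset.filter_subset _ _)
  have hinj : ∀ a₁ ∈ A, ∀ a₂ ∈ A,
      (A.filter (fun b => b.1 ≤ a₁.1)).card = (A.filter (fun b => b.1 ≤ a₂.1)).card → a₁ = a₂ := by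
    intro a₁ h₁ a₂ h₂ heq
    by_contra hne
    have key : ∀ u v : ℕ × ℕ, u ∈ A → v ∈ A → u.1 < v.1 →
        (A.filter (fun b => b.1 ≤ u.1)).card < (A.filter (fun b => b.1 ≤ v.1)).card := by
      intro u v hu hv huv
      apply Finset.card_lt_card
      rw [Finset.ssubset_iff_of_subset]
      · exact ⟨v, Finset.mem_filter.2 ⟨hv, le_rfl⟩, by rw [Finset.mem_filter]; push_neg; intro _; omega⟩
      · intro b hb
        rw [Finset.mem_filter] at hb ⊢
        exact ⟨hb.1, by omega⟩
    rcases anti_dich hA h₁ h₂ hne with h | h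
    · have := key a₁ a₂ h₁ h₂ h.1; omega
    · have := key a₂ a₁ h₂ h₁ h.1; omega
  have hsurj := Finset.surj_on_of_inj_on_of_card_le
    (s := A) (t := Finset.Icc 1 k)
    (fun a _ => (A.filter (fun b => b.1 ≤ a.1)).card)
    (fun a ha => hft a ha)
    (fun a₁ a₂ h₁ h₂ heq => hinj a₁ h₁ a₂ h₂ heq)
    (by rw [Nat.card_Icc]; omega)
  obtain ⟨a, ha, hfa⟩ := hsurj t (Finset.mem_Icc.2 ⟨ht1, htk⟩)
  have haY : a ∈ Y := hA.1 ha
  have haP := mem_P.1 (hY.1 haY)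
  -- relation among cards
  have h1 : (A.filter (fun b => b.1 ≤ a.1)).card
      + (A.filter (fun b => ¬ b.1 ≤ a.1)).card = k :=
    Finset.card_filter_add_card_filter_not _
  -- bound (i): elements strictly right of a
  have h2 : (A.filter (fun b => ¬ b.1 ≤ a.1)).card + a.1 ≤ p := by
    have hinj2 : Set.InjOn (Prod.fst : ℕ × ℕ → ℕ) ↑(A.filter (fun b => ¬ b.1 ≤ a.1)) := by
      intro x hx y hy hxy
      have hx' : x ∈ A := by
        simp only [Finset.coe_filter, Set.mem_setOf_eq] at hx; exact hx.1
      have hy' : y ∈ A := by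
        simp only [Finset.coe_filter, Set.mem_setOf_eq] at hy; exact hy.1
      exact antichain_fst_injOn hA (by simpa using hx') (by simpa using hy') hxy
    have hcardeq : (A.filter (fun b => ¬ b.1 ≤ a.1)).card
        = ((A.filter (fun b => ¬ b.1 ≤ a.1)).image Prod.fst).card :=
      (Finset.card_image_of_injOn hinj2).symm
    have hsub : (A.filter (fun b => ¬ b.1 ≤ a.1)).image Prod.fst ⊆ Finset.Icc (a.1+1) p := by
      intro v hv
      obtain ⟨b, hb, rfl⟩ := Finset.mem_image.1 hv
      rw [Finset.mem_filter] at hb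
      have := mem_P.1 (hY.1 (hA.1 hb.1))
      rw [Finset.mem_Icc]
      have := this.2.1
      omega
    have := Finset.card_le_card hsub
    rw [Nat.card_Icc] at this
    omega
  -- bound (ii): elements weakly below-left of a in second coordinate
  have hfe : A.filter (fun b => b.1 ≤ a.1) = A.filter (fun b => b.2 ≤ a.2) := by
    apply Finset.filter_congr
    intro b hb
    by_cases hba : b = a
    · subst hba; simp
    · have := anti_dich hA hb ha hba
      constructor <;> intro <;> omega
  have hta : t = (A.filter (fun b => b.1 ≤ a.1)).card := hfa
  have h3 : t + p ≤ a.2 := by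
    have hcardeq : (A.filter (fun b => b.2 ≤ a.2)).card
        = ((A.filter (fun b => b.2 ≤ a.2)).image Prod.snd).card := by
      rw [Finset.card_image_of_injOn]
      intro x hx y hy hxy
      have hx' : x ∈ A := by
        simp only [Finset.coe_filter, Set.mem_setOf_eq] at hx; exact hx.1
      have hy' : y ∈ A := by
        simp only [Finset.coe_filter, Set.mem_setOf_eq] at hy; exact hy.1
      by_contra hne
      have := anti_dich hA hx' hy' hne
      omega
    have hsub : (A.filter (fun b => b.2 ≤ a.2)).image Prod.snd ⊆ Finset.Icc (p+1) a.2 := by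
      intro v hv
      obtain ⟨b, hb, rfl⟩ := Finset.mem_image.1 hv
      rw [Finset.mem_filter] at hb
      have := mem_P.1 (hY.1 (hA.1 hb.1))
      rw [Finset.mem_Icc]
      exact ⟨this.2.2.1, hb.2⟩
    have hle := Finset.card_le_card hsub
    rw [Nat.card_Icc] at hle
    have hX : (A.filter (fun b => b.1 ≤ a.1)).card
        = (A.filter (fun b => b.2 ≤ a.2)).card := by rw [hfe]
    have := haP.2.2.1
    omega
  apply hY.2 (p + t - k, p + t) ?_ a haY ?_
  · rw [mem_P_mk]
    have := haP.1
    have := haP.2.2.2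
    omega
  · rw [le_mk_iff]
    constructor
    · omega
    · omega

lemma Dg_card {p m : ℕ} : (Dg p m).card = m := by
  unfold Dg
  have hinj : Set.InjOn (fun t => (p + t - m, p + t)) ↑(Finset.Icc 1 m) := by
    intro t ht t' ht' h
    have := congrArg Prod.snd h
    simp only at this
    omega
  rw [Finset.card_image_of_injOn hinj, Nat.card_Icc]
  omega

lemma diag_antichain {p q m : ℕ} {Y : Finset (ℕ × ℕ)} (hmp : m ≤ p)
    (hsub : Dg p m ⊆ Y) : IsAntichainIn Y (Dg p m) := by
  refine ⟨hsub, ?_⟩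
  intro a ha b hb hne
  obtain ⟨t, ht1, htm, rfl⟩ := mem_Dg.1 ha
  obtain ⟨t', ht1', htm', rfl⟩ := mem_Dg.1 hb
  have htne : t ≠ t' := by
    intro h; exact hne (by rw [h])
  rw [le_iff, le_iff]
  simp only
  omega

lemma no_diag_beyond {p q k : ℕ} {Y : Finset (ℕ × ℕ)} (hY : IsLowerIdeal p q Y)
    (h : ¬ (k ≤ p ∧ k ≤ q)) (hk1 : 1 ≤ k) : ¬ Dg p k ⊆ Y := by
  intro hsub
  rcases (by omega : p < k ∨ q < k) with hc | hc
  · have hcell : (p + 1 - k, p + 1) ∈ Y := hsub (mem_Dg.2 ⟨1, le_rfl, by omega, rfl⟩)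
    have := mem_P_mk.1 (hY.1 hcell)
    omega
  · have hcell : (p + k - k, p + k) ∈ Y := hsub (mem_Dg.2 ⟨k, hk1, le_rfl, rfl⟩)
    have := mem_P_mk.1 (hY.1 hcell)
    omega

lemma width_iff {p q m : ℕ} {Y : Finset (ℕ × ℕ)} (hY : IsLowerIdeal p q Y)
    (hmp : m ≤ p) (hmq : m ≤ q) :
    WidthIs Y m ↔ (Dg p m ⊆ Y ∧ ¬ Dg p (m+1) ⊆ Y) := by
  constructor
  · rintro ⟨⟨A, hA, hAc⟩, hbound⟩
    constructor
    · have := diag_subset_of_antichain hY hA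
      rwa [hAc] at this
    · intro hsub
      by_cases hcase : m + 1 ≤ p ∧ m + 1 ≤ q
      · have hanti := diag_antichain (q := q) hcase.1 hsub
        have := hbound _ hanti
        rw [Dg_card] at this
        omega
      · exact no_diag_beyond hY hcase (by omega) hsub
  · rintro ⟨h1, h2⟩
    refine ⟨⟨Dg p m, diag_antichain (q := q) hmp h1, Dg_card⟩, ?_⟩
    intro A hA
    by_contra hlt
    push_neg at hlt
    obtain ⟨A', hsub', hcard'⟩ := Finset.exists_subset_card_eq (s := A) (n := m+1) (by omega)
    have hA' : IsAntichainIn Y A' :=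
      ⟨Finset.Subset.trans hsub' hA.1, fun a ha b hb => hA.2 a (hsub' ha) b (hsub' hb)⟩
    have := diag_subset_of_antichain hY hA'
    rw [hcard'] at this
    exact h2 this

lemma Fi_succ_subset {p q m : ℕ} (hmp : m ≤ p) (hmq : m ≤ q) :
    Fi p q (m+1) ⊆ Fi p q m := by
  intro Y hY
  rw [Fi, Finset.mem_filter] at hY ⊢
  have hpow := hY.1
  have hid := hY.2.1
  have hD := hY.2.2
  refine ⟨hpow, hid, ?_⟩
  intro x hx
  obtain ⟨t, ht1, htm, rfl⟩ := mem_Dg.1 hx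
  have hcell : (p + (t+1) - (m+1), p + (t+1)) ∈ Y :=
    hD (mem_Dg.2 ⟨t+1, by omega, by omega, rfl⟩)
  apply hid.2 _ ?_ _ hcell ?_
  · rw [mem_P_mk]
    omega
  · rw [le_mk_iff]
    simp only
    omega

/-- Monotonicity of binomial coefficients up to the middle. -/
lemma choose_mono_half {n a b : ℕ} (hab : a ≤ b) (hb : b + b ≤ n + 1) :
    n.choose a ≤ n.choose b := by
  induction b with
  | zero => simp_all
  | succ b ih =>
    rcases Nat.eq_or_lt_of_le hab with h | h
    · rw [h]
    · have hstep : n.choose b ≤ n.choose (b+1) := by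
        have h := Nat.choose_succ_right_eq n b
        have h2 : n.choose b * (b+1) ≤ n.choose b * (n - b) :=
          Nat.mul_le_mul_left _ (by omega)
        rw [← h] at h2
        exact Nat.le_of_mul_le_mul_right h2 (by omega)
      exact le_trans (ih (by omega) (by omega)) hstep

/-- The number of lower-order ideals of width `m` in the poset of positive
noncompact roots of `su(p,q)` equals `C(p+q, m) - C(p+q, m-1)`
(with the convention `C(n, -1) = 0`). -/
theorem count_lower_ideals_su (p q m : ℕ) (hm : m ≤ min p q) :
    Nat.card {Y : Finset (ℕ × ℕ) // IsLowerIdeal p q Y ∧ WidthIs Y m} =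
      (p + q).choose m - (if m = 0 then 0 else (p + q).choose (m - 1)) := by
  have hmp : m ≤ p := le_trans hm (min_le_left _ _)
  have hmq : m ≤ q := le_trans hm (min_le_right _ _)
  classical
  set Fm := ((P p q).powerset).filter (fun Y => IsLowerIdeal p q Y ∧ WidthIs Y m) with hFm
  have e : {Y : Finset (ℕ × ℕ) // IsLowerIdeal p q Y ∧ WidthIs Y m} ≃ {Y // Y ∈ Fm} :=
    Equiv.subtypeEquivRight (fun Y => by
      rw [hFm, Finset.mem_filter, Finset.mem_powerset]
      exact ⟨fun h => ⟨h.1.1, h⟩, fun h => h.2⟩)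
  rw [Nat.card_congr e, Nat.card_eq_finsetCard]
  have hFmeq : Fm = Fi p q m \ Fi p q (m+1) := by
    ext Y
    rw [hFm, Finset.mem_filter, Finset.mem_powerset, Finset.mem_sdiff]
    constructor
    · rintro ⟨hsub, hid, hw⟩
      rw [width_iff hid hmp hmq] at hw
      refine ⟨?_, ?_⟩
      · rw [Fi, Finset.mem_filter, Finset.mem_powerset]
        exact ⟨hsub, hid, hw.1⟩
      · intro hc
        rw [Fi, Finset.mem_filter] at hc
        exact hw.2 hc.2.2
    · rintro ⟨h1, h2⟩
      rw [Fi, Finset.mem_filter, Finset.mem_powerset] at h1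
      have hsub := h1.1
      have hid := h1.2.1
      have hD := h1.2.2
      refine ⟨hsub, hid, (width_iff hid hmp hmq).2 ⟨hD, ?_⟩⟩
      intro hc
      apply h2
      rw [Fi, Finset.mem_filter, Finset.mem_powerset]
      exact ⟨hsub, hid, hc⟩
  rw [hFmeq, Finset.card_sdiff_of_subset (Fi_succ_subset hmp hmq)]
  have hFim : (Fi p q m).card = (p+q).choose p - (p+q).choose (p+q+1-m) := card_Fi hmp hmq
  have hpn : (p:ℕ) ≤ p + q := by omega
  have hCp_pos : 1 ≤ (p+q).choose p := Nat.choose_pos hpn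
  have hCmin : (p+q).choose p = (p+q).choose (min p q) := by
    rcases le_total p q with h | h
    · rw [min_eq_left h]
    · rw [min_eq_right h, ← Nat.choose_symm hpn]
      congr 1
      omega
  by_cases hcase : m + 1 ≤ p ∧ m + 1 ≤ q
  · have hFim1 : (Fi p q (m+1)).card = (p+q).choose p - (p+q).choose (p+q+1-(m+1)) :=
      card_Fi hcase.1 hcase.2
    rw [hFim, hFim1]
    have hCm : (p+q).choose (p+q+1-(m+1)) = (p+q).choose m := by
      have : p+q+1-(m+1) = (p+q) - m := by omega
      rw [this, Nat.choose_symm (by omega)]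
    have hle1 : (p+q).choose m ≤ (p+q).choose p := by
      rw [hCmin]
      exact choose_mono_half hm (by omega)
    by_cases hm0 : m = 0
    · subst hm0
      rw [if_pos rfl]
      have h0 : (p+q).choose (p+q+1-0) = 0 := Nat.choose_eq_zero_of_lt (by omega)
      rw [h0, hCm]
      simp only [Nat.choose_zero_right]
      omega
    · rw [if_neg hm0]
      have hCm1 : (p+q).choose (p+q+1-m) = (p+q).choose (m-1) := by
        have : p+q+1-m = (p+q) - (m-1) := by omega
        rw [this, Nat.choose_symm (by omega)]
      rw [hCm, hCm1]
      have hle2 : (p+q).choose (m-1) ≤ (p+q).choose m :=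
        choose_mono_half (by omega) (by omega)
      omega
  · have hempty : Fi p q (m+1) = ∅ := by
      apply Finset.eq_empty_of_forall_notMem
      intro Y hY
      rw [Fi, Finset.mem_filter] at hY
      exact no_diag_beyond hY.2.1 hcase (by omega) hY.2.2
    rw [hFim, hempty]
    simp only [Finset.card_empty, Nat.sub_zero]
    have hmm : m = min p q := by omega
    have hCpm : (p+q).choose p = (p+q).choose m := by rw [hCmin, ← hmm]
    by_cases hm0 : m = 0
    · subst hm0
      rw [if_pos rfl]
      have h0 : (p+q).choose (p+q+1-0) = 0 := Nat.choose_eq_zero_of_lt (by omega)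
      rw [h0]
      omega
    · rw [if_neg hm0]
      have hCm1 : (p+q).choose (p+q+1-m) = (p+q).choose (m-1) := by
        have : p+q+1-m = (p+q) - (m-1) := by omega
        rw [this, Nat.choose_symm (by omega)]
      rw [hCm1]
      omega

end Stmt0
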